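/- Let P = P₀P₁…P_{n−1} (n ≥ 2) be a finite path in ℤ² (injective, consecutive points adjacent). Then the canonical embedding 𝔈_P : [0,1] → ℝ² is injective. -/

import Mathlib

/-- The standard inclusion ℤ² → ℝ². -/
def toR2 (p : ℤ × ℤ) : ℝ × ℝ := ((p.1 : ℝ), (p.2 : ℝ))

/-- Canonical embedding of a path `P₀ … P_{n-1}` in ℝ²:
piecewise-linear interpolation through the points, parametrized over [0,1]. -/
noncomputable def embed (n : ℕ) (P : ℕ → ℤ × ℤ) (s : ℝ) : ℝ × ℝ :=
  if s = 1 then toR2 (P (n - 1))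
  else
    let t : ℝ := s * ((n : ℝ) - 1)
    let k : ℕ := ⌊t⌋.toNat
    toR2 (P k) + (t - (k : ℝ)) • (toR2 (P (k + 1)) - toR2 (P k))

lemma frac_ne_int (a c d : ℤ) (hd : d = 1 ∨ d = -1) (r : ℝ)
    (h0 : 0 < r) (h1 : r < 1) (h : (a : ℝ) = c + r * d) : False := by
  rcases hd with rfl | rfl <;> push_cast at h
  · have h2 : ((a - c : ℤ) : ℝ) = r := by push_cast; linarith
    have h3 : (0:ℤ) < a - c := by exact_mod_cast h2 ▸ h0
    have h4 : (a - c : ℤ) < 1 := by exact_mod_cast h2 ▸ h1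
    omega
  · have h2 : ((c - a : ℤ) : ℝ) = r := by push_cast; linarith
    have h3 : (0:ℤ) < c - a := by exact_mod_cast h2 ▸ h0
    have h4 : (c - a : ℤ) < 1 := by exact_mod_cast h2 ▸ h1
    omega

lemma one_dim (a c d₁ d₂ : ℤ) (hd₁ : d₁ = 1 ∨ d₁ = -1) (hd₂ : d₂ = 1 ∨ d₂ = -1)
    (r₁ r₂ : ℝ) (h₁0 : 0 < r₁) (h₁1 : r₁ < 1) (h₂0 : 0 < r₂) (h₂1 : r₂ < 1)
    (h : (a : ℝ) + r₁ * d₁ = c + r₂ * d₂) :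
    (a = c ∧ r₁ = r₂) ∨ (a = c + d₂ ∧ c = a + d₁) := by
  rcases hd₁ with rfl | rfl <;> rcases hd₂ with rfl | rfl <;> push_cast at h
  · left
    have h2 : ((a - c : ℤ) : ℝ) = r₂ - r₁ := by push_cast; linarith
    have h3 : (-1:ℤ) < a - c := by exact_mod_cast (by linarith [h2] : (-1:ℝ) < ((a - c : ℤ):ℝ))
    have h4 : (a - c : ℤ) < 1 := by exact_mod_cast (by linarith [h2] : ((a - c : ℤ):ℝ) < 1)
    have h5 : a = c := by omega
    refine ⟨h5, ?_⟩
    have : (a:ℝ) = c := by exact_mod_cast h5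
    linarith
  · right
    have h2 : ((c - a : ℤ) : ℝ) = r₁ + r₂ := by push_cast; linarith
    have h3 : (0:ℤ) < c - a := by exact_mod_cast (by linarith [h2] : (0:ℝ) < ((c - a : ℤ):ℝ))
    have h4 : (c - a : ℤ) < 2 := by exact_mod_cast (by linarith [h2] : ((c - a : ℤ):ℝ) < 2)
    omega
  · right
    have h2 : ((a - c : ℤ) : ℝ) = r₁ + r₂ := by push_cast; linarith
    have h3 : (0:ℤ) < a - c := by exact_mod_cast (by linarith [h2] : (0:ℝ) < ((a - c : ℤ):ℝ))
    have h4 : (a - c : ℤ) < 2 := by exact_mod_cast (by linarith [h2] : ((a - c : ℤ):ℝ) < 2)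
    omega
  · left
    have h2 : ((a - c : ℤ) : ℝ) = r₁ - r₂ := by push_cast; linarith
    have h3 : (-1:ℤ) < a - c := by exact_mod_cast (by linarith [h2] : (-1:ℝ) < ((a - c : ℤ):ℝ))
    have h4 : (a - c : ℤ) < 1 := by exact_mod_cast (by linarith [h2] : ((a - c : ℤ):ℝ) < 1)
    have h5 : a = c := by omega
    refine ⟨h5, ?_⟩
    have : (a:ℝ) = c := by exact_mod_cast h5
    linarith

lemma seg_inj (n : ℕ) (P : ℕ → ℤ × ℤ)
    (hinj : ∀ a < n, ∀ b < n, P a = P b → a = b)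
    (hadj : ∀ k, k + 1 < n →
      |(P (k + 1)).1 - (P k).1| + |(P (k + 1)).2 - (P k).2| = 1)
    (k₁ k₂ : ℕ) (hk₁ : k₁ < n) (hk₂ : k₂ < n)
    (r₁ r₂ : ℝ) (h₁0 : 0 ≤ r₁) (h₁1 : r₁ < 1) (h₂0 : 0 ≤ r₂) (h₂1 : r₂ < 1)
    (hk₁' : r₁ ≠ 0 → k₁ + 1 < n) (hk₂' : r₂ ≠ 0 → k₂ + 1 < n)
    (heq : toR2 (P k₁) + r₁ • (toR2 (P (k₁+1)) - toR2 (P k₁))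
         = toR2 (P k₂) + r₂ • (toR2 (P (k₂+1)) - toR2 (P k₂))) :
    k₁ = k₂ ∧ r₁ = r₂ := by
  have e1 := congrArg Prod.fst heq
  have e2 := congrArg Prod.snd heq
  simp only [toR2, Prod.fst_add, Prod.snd_add, Prod.smul_fst, Prod.smul_snd,
    Prod.fst_sub, Prod.snd_sub, smul_eq_mul] at e1 e2
  by_cases hr₁ : r₁ = 0 <;> by_cases hr₂ : r₂ = 0
  · -- both endpoints
    subst hr₁; subst hr₂
    simp only [zero_mul, add_zero] at e1 e2
    have hp : P k₁ = P k₂ :=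
      Prod.ext_iff.mpr ⟨by exact_mod_cast e1, by exact_mod_cast e2⟩
    exact ⟨hinj _ hk₁ _ hk₂ hp, rfl⟩
  · -- r₁ = 0, r₂ interior : impossible
    exfalso
    subst hr₁
    simp only [zero_mul, add_zero] at e1 e2
    have hkb := hk₂' hr₂
    have hb₀ : 0 < r₂ := lt_of_le_of_ne h₂0 (Ne.symm hr₂)
    have hd := hadj k₂ hkb
    have hd' : ((P (k₂+1)).1 - (P k₂).1 = 0 ∧
          ((P (k₂+1)).2 - (P k₂).2 = 1 ∨ (P (k₂+1)).2 - (P k₂).2 = -1)) ∨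
        ((P (k₂+1)).2 - (P k₂).2 = 0 ∧
          ((P (k₂+1)).1 - (P k₂).1 = 1 ∨ (P (k₂+1)).1 - (P k₂).1 = -1)) := by
      rcases abs_cases ((P (k₂+1)).1 - (P k₂).1) with ⟨hx, _⟩ | ⟨hx, _⟩ <;>
        rcases abs_cases ((P (k₂+1)).2 - (P k₂).2) with ⟨hy, _⟩ | ⟨hy, _⟩ <;> omega
    rcases hd' with ⟨_, hy⟩ | ⟨_, hx⟩
    · exact frac_ne_int (P k₁).2 (P k₂).2 _ hy r₂ hb₀ h₂1
        (by push_cast; linear_combination e2)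
    · exact frac_ne_int (P k₁).1 (P k₂).1 _ hx r₂ hb₀ h₂1
        (by push_cast; linear_combination e1)
  · -- r₂ = 0, r₁ interior : impossible
    exfalso
    subst hr₂
    simp only [zero_mul, add_zero] at e1 e2
    have hka := hk₁' hr₁
    have ha₀ : 0 < r₁ := lt_of_le_of_ne h₁0 (Ne.symm hr₁)
    have hd := hadj k₁ hka
    have hd' : ((P (k₁+1)).1 - (P k₁).1 = 0 ∧
          ((P (k₁+1)).2 - (P k₁).2 = 1 ∨ (P (k₁+1)).2 - (P k₁).2 = -1)) ∨
        ((P (k₁+1)).2 - (P k₁).2 = 0 ∧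
          ((P (k₁+1)).1 - (P k₁).1 = 1 ∨ (P (k₁+1)).1 - (P k₁).1 = -1)) := by
      rcases abs_cases ((P (k₁+1)).1 - (P k₁).1) with ⟨hx, _⟩ | ⟨hx, _⟩ <;>
        rcases abs_cases ((P (k₁+1)).2 - (P k₁).2) with ⟨hy, _⟩ | ⟨hy, _⟩ <;> omega
    rcases hd' with ⟨_, hy⟩ | ⟨_, hx⟩
    · exact frac_ne_int (P k₂).2 (P k₁).2 _ hy r₁ ha₀ h₁1
        (by push_cast; linear_combination e2.symm)
    · exact frac_ne_int (P k₂).1 (P k₁).1 _ hx r₁ ha₀ h₁1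
        (by push_cast; linear_combination e1.symm)
  · -- both interior
    have hka := hk₁' hr₁
    have hkb := hk₂' hr₂
    have ha₀ : 0 < r₁ := lt_of_le_of_ne h₁0 (Ne.symm hr₁)
    have hb₀ : 0 < r₂ := lt_of_le_of_ne h₂0 (Ne.symm hr₂)
    have hda : ((P (k₁+1)).1 - (P k₁).1 = 0 ∧
          ((P (k₁+1)).2 - (P k₁).2 = 1 ∨ (P (k₁+1)).2 - (P k₁).2 = -1)) ∨
        ((P (k₁+1)).2 - (P k₁).2 = 0 ∧
          ((P (k₁+1)).1 - (P k₁).1 = 1 ∨ (P (k₁+1)).1 - (P k₁).1 = -1)) := by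
      have hd := hadj k₁ hka
      rcases abs_cases ((P (k₁+1)).1 - (P k₁).1) with ⟨hx, _⟩ | ⟨hx, _⟩ <;>
        rcases abs_cases ((P (k₁+1)).2 - (P k₁).2) with ⟨hy, _⟩ | ⟨hy, _⟩ <;> omega
    have hdb : ((P (k₂+1)).1 - (P k₂).1 = 0 ∧
          ((P (k₂+1)).2 - (P k₂).2 = 1 ∨ (P (k₂+1)).2 - (P k₂).2 = -1)) ∨
        ((P (k₂+1)).2 - (P k₂).2 = 0 ∧
          ((P (k₂+1)).1 - (P k₂).1 = 1 ∨ (P (k₂+1)).1 - (P k₂).1 = -1)) := by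
      have hd := hadj k₂ hkb
      rcases abs_cases ((P (k₂+1)).1 - (P k₂).1) with ⟨hx, _⟩ | ⟨hx, _⟩ <;>
        rcases abs_cases ((P (k₂+1)).2 - (P k₂).2) with ⟨hy, _⟩ | ⟨hy, _⟩ <;> omega
    rcases hda with ⟨hax, hay⟩ | ⟨hay, hax⟩ <;> rcases hdb with ⟨hbx, hby⟩ | ⟨hby, hbx⟩
    · -- both vertical
      have q₁ : (P (k₁+1)).1 = (P k₁).1 := by omega
      have q₂ : (P (k₂+1)).1 = (P k₂).1 := by omega
      rw [q₁, q₂] at e1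
      simp only [sub_self, mul_zero, add_zero] at e1
      have hx12 : (P k₁).1 = (P k₂).1 := by exact_mod_cast e1
      have h2' : ((P k₁).2 : ℝ) + r₁ * (((P (k₁+1)).2 - (P k₁).2 : ℤ) : ℝ)
          = ((P k₂).2 : ℝ) + r₂ * (((P (k₂+1)).2 - (P k₂).2 : ℤ) : ℝ) := by
        push_cast; linear_combination e2
      rcases one_dim _ _ _ _ hay hby r₁ r₂ ha₀ h₁1 hb₀ h₂1 h2' with ⟨hb, hr⟩ | ⟨hb1, hb2⟩
      · have hp : P k₁ = P k₂ := Prod.ext_iff.mpr ⟨hx12, hb⟩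
        exact ⟨hinj _ hk₁ _ hk₂ hp, hr⟩
      · exfalso
        have hp1 : P k₁ = P (k₂+1) := Prod.ext_iff.mpr ⟨by omega, by omega⟩
        have hp2 : P (k₁+1) = P k₂ := Prod.ext_iff.mpr ⟨by omega, by omega⟩
        have := hinj _ hk₁ _ hkb hp1
        have := hinj _ hka _ hk₂ hp2
        omega
    · -- seg1 vertical, seg2 horizontal
      exfalso
      have q₁ : (P (k₁+1)).1 = (P k₁).1 := by omega
      rw [q₁] at e1
      simp only [sub_self, mul_zero, add_zero] at e1
      exact frac_ne_int (P k₁).1 (P k₂).1 _ hbx r₂ hb₀ h₂1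
        (by push_cast; linear_combination e1)
    · -- seg1 horizontal, seg2 vertical
      exfalso
      have q₂ : (P (k₂+1)).1 = (P k₂).1 := by omega
      rw [q₂] at e1
      simp only [sub_self, mul_zero, add_zero] at e1
      exact frac_ne_int (P k₂).1 (P k₁).1 _ hax r₁ ha₀ h₁1
        (by push_cast; linear_combination e1.symm)
    · -- both horizontal
      have q₁ : (P (k₁+1)).2 = (P k₁).2 := by omega
      have q₂ : (P (k₂+1)).2 = (P k₂).2 := by omega
      rw [q₁, q₂] at e2
      simp only [sub_self, mul_zero, add_zero] at e2
      have hy12 : (P k₁).2 = (P k₂).2 := by exact_mod_cast e2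
      have h1' : ((P k₁).1 : ℝ) + r₁ * (((P (k₁+1)).1 - (P k₁).1 : ℤ) : ℝ)
          = ((P k₂).1 : ℝ) + r₂ * (((P (k₂+1)).1 - (P k₂).1 : ℤ) : ℝ) := by
        push_cast; linear_combination e1
      rcases one_dim _ _ _ _ hax hbx r₁ r₂ ha₀ h₁1 hb₀ h₂1 h1' with ⟨hb, hr⟩ | ⟨hb1, hb2⟩
      · have hp : P k₁ = P k₂ := Prod.ext_iff.mpr ⟨hb, hy12⟩
        exact ⟨hinj _ hk₁ _ hk₂ hp, hr⟩
      · exfalso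
        have hp1 : P k₁ = P (k₂+1) := Prod.ext_iff.mpr ⟨by omega, by omega⟩
        have hp2 : P (k₁+1) = P k₂ := Prod.ext_iff.mpr ⟨by omega, by omega⟩
        have := hinj _ hk₁ _ hkb hp1
        have := hinj _ hka _ hk₂ hp2
        omega

lemma embed_repr (n : ℕ) (P : ℕ → ℤ × ℤ) (hn : 2 ≤ n) (s : ℝ)
    (hs0 : 0 ≤ s) (hs1 : s ≤ 1) (hne : s ≠ 1) :
    ∃ (k : ℕ) (r : ℝ), k + 1 < n ∧ 0 ≤ r ∧ r < 1 ∧ (k : ℝ) + r = s * ((n : ℝ) - 1) ∧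
      embed n P s = toR2 (P k) + r • (toR2 (P (k + 1)) - toR2 (P k)) := by
  have hn1 : (1:ℝ) ≤ (n:ℝ) - 1 := by
    have : (2:ℝ) ≤ n := by exact_mod_cast hn
    linarith
  set t : ℝ := s * ((n : ℝ) - 1) with ht
  have ht0 : 0 ≤ t := mul_nonneg hs0 (by linarith)
  have hslt : s < 1 := lt_of_le_of_ne hs1 hne
  have htlt : t < (n:ℝ) - 1 := by nlinarith
  have hfl0 : (0:ℤ) ≤ ⌊t⌋ := Int.floor_nonneg.mpr ht0
  set k : ℕ := ⌊t⌋.toNat with hk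
  have hkz : (k : ℤ) = ⌊t⌋ := Int.toNat_of_nonneg hfl0
  have hkr : (k : ℝ) = (⌊t⌋ : ℝ) := by exact_mod_cast hkz
  refine ⟨k, t - (k:ℝ), ?_, ?_, ?_, by ring, ?_⟩
  · have hflt : ⌊t⌋ < (n : ℤ) - 1 := by
      apply Int.floor_lt.mpr
      push_cast
      linarith
    omega
  · rw [hkr]; linarith [Int.floor_le t]
  · rw [hkr]; linarith [Int.lt_floor_add_one t]
  · simp only [embed, if_neg hne]
    rfl

/-- The canonical embedding of a finite self-avoiding path in ℤ² (n ≥ 2) is injective: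
self-avoidance of the discrete path implies the interpolating polygonal curve is simple. -/
theorem embed_injective (n : ℕ) (P : ℕ → ℤ × ℤ) (hn : 2 ≤ n)
    (hinj : ∀ a < n, ∀ b < n, P a = P b → a = b)
    (hadj : ∀ k, k + 1 < n →
      |(P (k + 1)).1 - (P k).1| + |(P (k + 1)).2 - (P k).2| = 1) :
    Set.InjOn (embed n P) (Set.Icc 0 1) := by
  intro s₁ hs₁ s₂ hs₂ h
  by_cases h₁ : s₁ = 1 <;> by_cases h₂ : s₂ = 1
  · rw [h₁, h₂]
  · exfalso
    obtain ⟨k, r, hkn, hr0, hr1, _, he⟩ := embed_repr n P hn s₂ hs₂.1 hs₂.2 h₂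
    rw [he] at h
    have h1' : embed n P s₁
        = toR2 (P (n-1)) + (0:ℝ) • (toR2 (P (n-1+1)) - toR2 (P (n-1))) := by
      simp [embed, h₁]
    rw [h1'] at h
    obtain ⟨hk, -⟩ := seg_inj n P hinj hadj (n-1) k (by omega) (by omega) 0 r
      le_rfl zero_lt_one hr0 hr1 (fun hc => absurd rfl hc) (fun _ => hkn) h
    omega
  · exfalso
    obtain ⟨k, r, hkn, hr0, hr1, _, he⟩ := embed_repr n P hn s₁ hs₁.1 hs₁.2 h₁
    rw [he] at h
    have h2' : embed n P s₂
        = toR2 (P (n-1)) + (0:ℝ) • (toR2 (P (n-1+1)) - toR2 (P (n-1))) := by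
      simp [embed, h₂]
    rw [h2'] at h
    obtain ⟨hk, -⟩ := seg_inj n P hinj hadj (n-1) k (by omega) (by omega) 0 r
      le_rfl zero_lt_one hr0 hr1 (fun hc => absurd rfl hc) (fun _ => hkn) h.symm
    omega
  · obtain ⟨k₁, r₁, hk₁n, hr₁0, hr₁1, hs₁', he₁⟩ := embed_repr n P hn s₁ hs₁.1 hs₁.2 h₁
    obtain ⟨k₂, r₂, hk₂n, hr₂0, hr₂1, hs₂', he₂⟩ := embed_repr n P hn s₂ hs₂.1 hs₂.2 h₂
    rw [he₁, he₂] at h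
    obtain ⟨hk, hr⟩ := seg_inj n P hinj hadj k₁ k₂ (by omega) (by omega) r₁ r₂
      hr₁0 hr₁1 hr₂0 hr₂1 (fun _ => hk₁n) (fun _ => hk₂n) h
    have h2n : (2:ℝ) ≤ n := by exact_mod_cast hn
    have hne : ((n:ℝ) - 1) ≠ 0 := ne_of_gt (by linarith)
    apply mul_right_cancel₀ hne
    rw [← hs₁', ← hs₂', hk, hr]
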